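/- If 0 < ρ < π, then the sphere parametrization map S_ρ(u, v) = γ_{u,v}(ρ) is injective on the domain (−π, π] × (−π/2, π/2). (This is the 'no self-intersection' direction of Proposition 2.3: the geodesic sphere of radius ρ in S²×ℝ exists, i.e. is free of self-intersections, precisely for ρ ∈ [0, π).) -/

import Mathlib

open Real

/-- The geodesic curves of `S² × ℝ` starting at `(1,0,0)` in the Euclidean model,
with longitude `u`, altitude `v` and arc-length parameter `τ` (equation (2.2)). -/
noncomputable def geo (u v τ : ℝ) : EuclideanSpace ℝ (Fin 3) :=
  (WithLp.equiv 2 (Fin 3 → ℝ)).symm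
    ![Real.exp (τ * Real.sin v) * Real.cos (τ * Real.cos v),
      Real.exp (τ * Real.sin v) * Real.sin (τ * Real.cos v) * Real.cos u,
      Real.exp (τ * Real.sin v) * Real.sin (τ * Real.cos v) * Real.sin u]

/-- For `0 < ρ < π` the geodesic sphere parametrization `S_ρ(u, v) = γ_{u,v}(ρ)` is
injective on `(−π, π] × (−π/2, π/2)` (the no-self-intersection direction of
Proposition 2.3). -/
theorem sphere_param_injOn (ρ : ℝ) (h0 : 0 < ρ) (hπ : ρ < π) :
    Set.InjOn (fun p : ℝ × ℝ => geo p.1 p.2 ρ)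
      (Set.Ioc (-π) π ×ˢ Set.Ioo (-(π / 2)) (π / 2)) := by
  rintro ⟨u₁, v₁⟩ ⟨hu₁, hv₁⟩ ⟨u₂, v₂⟩ ⟨hu₂, hv₂⟩ h
  simp only [geo] at h
  have hm := (WithLp.equiv 2 (Fin 3 → ℝ)).symm.injective h
  have e0 := congrFun hm 0
  have e1 := congrFun hm 1
  have e2 := congrFun hm 2
  simp only [Matrix.cons_val_zero, Matrix.cons_val_one, Matrix.head_cons,
    Matrix.cons_val_two, Matrix.tail_cons] at e0 e1 e2
  -- norms equal: exp (ρ sin v₁) = exp (ρ sin v₂)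
  have hsq : Real.exp (ρ * Real.sin v₁) ^ 2 = Real.exp (ρ * Real.sin v₂) ^ 2 := by
    have p1 := Real.sin_sq_add_cos_sq (ρ * Real.cos v₁)
    have p2 := Real.sin_sq_add_cos_sq (ρ * Real.cos v₂)
    have q1 := Real.sin_sq_add_cos_sq u₁
    have q2 := Real.sin_sq_add_cos_sq u₂
    have s0 := congrArg (· ^ 2) e0
    have s1 := congrArg (· ^ 2) e1
    have s2 := congrArg (· ^ 2) e2
    linear_combination s0 + s1 + s2 - Real.exp (ρ * Real.sin v₁) ^ 2 * p1
      - (Real.exp (ρ * Real.sin v₁) * Real.sin (ρ * Real.cos v₁)) ^ 2 * q1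
      + Real.exp (ρ * Real.sin v₂) ^ 2 * p2
      + (Real.exp (ρ * Real.sin v₂) * Real.sin (ρ * Real.cos v₂)) ^ 2 * q2
  have hexp : Real.exp (ρ * Real.sin v₁) = Real.exp (ρ * Real.sin v₂) := by
    have hfac : (Real.exp (ρ * Real.sin v₁) - Real.exp (ρ * Real.sin v₂)) *
        (Real.exp (ρ * Real.sin v₁) + Real.exp (ρ * Real.sin v₂)) = 0 := by
      linear_combination hsq
    rcases mul_eq_zero.1 hfac with h' | h'
    · linarith
    · nlinarith [Real.exp_pos (ρ * Real.sin v₁), Real.exp_pos (ρ * Real.sin v₂)]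
  have hsin : Real.sin v₁ = Real.sin v₂ := by
    have := Real.exp_injective hexp
    exact mul_left_cancel₀ h0.ne' this
  have hv : v₁ = v₂ := by
    apply Real.injOn_sin (Set.mem_Icc.2 ⟨hv₁.1.le, hv₁.2.le⟩)
      (Set.mem_Icc.2 ⟨hv₂.1.le, hv₂.2.le⟩) hsin
  subst hv
  -- sin (ρ cos v₁) > 0
  have hcv : 0 < Real.cos v₁ := Real.cos_pos_of_mem_Ioo ⟨by linarith [hv₁.1], hv₁.2⟩
  have hcle : Real.cos v₁ ≤ 1 := Real.cos_le_one v₁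
  have hsc : 0 < Real.sin (ρ * Real.cos v₁) :=
    Real.sin_pos_of_pos_of_lt_pi (by positivity) (by nlinarith)
  have hne : Real.exp (ρ * Real.sin v₁) * Real.sin (ρ * Real.cos v₁) ≠ 0 :=
    (mul_pos (Real.exp_pos _) hsc).ne'
  have hc : Real.cos u₁ = Real.cos u₂ := by
    apply mul_left_cancel₀ hne
    linarith [e1]
  have hs : Real.sin u₁ = Real.sin u₂ := by
    apply mul_left_cancel₀ hne
    linarith [e2]
  have hcos1 : Real.cos (u₁ - u₂) = 1 := by
    rw [Real.cos_sub, hc, hs]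
    nlinarith [Real.sin_sq_add_cos_sq u₂]
  have hd : u₁ - u₂ = 0 := by
    rw [Real.cos_eq_one_iff_of_lt_of_lt] at hcos1
    · exact hcos1
    · have := Real.pi_pos; linarith [hu₁.1, hu₂.2]
    · have := Real.pi_pos; linarith [hu₁.2, hu₂.1]
  have : u₁ = u₂ := by linarith
  simp [this]
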